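/- Let A be a four-dimensional partially alternative real nonassociative division algebra with unit 1 admitting a reflection. Then there exists a basis {1, i, w, v} of A such that i² = −1, iw = −v, iv = w, wi = v, vi = −w, and each of the products w², wv, vw, v² lies in span_ℝ{1, i}. -/

import Mathlib

open Module

private lemma exists_ker_aux {V : Type*} [AddCommGroup V] [Module ℝ V] [FiniteDimensional ℝ V]
    (S T : Submodule ℝ V) (f : V →ₗ[ℝ] V) (hr : ∀ x ∈ S, f x ∈ T)
    (h : finrank ℝ T < finrank ℝ S) : ∃ x ∈ S, x ≠ 0 ∧ f x = 0 := by
  set g : S →ₗ[ℝ] V := f.comp S.subtype with hg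
  have hrange : LinearMap.range g ≤ T := by rintro _ ⟨y, rfl⟩; exact hr y y.2
  have h1 : finrank ℝ (LinearMap.range g) ≤ finrank ℝ T := Submodule.finrank_mono hrange
  have h2 := g.finrank_range_add_finrank_ker
  have h3 : LinearMap.ker g ≠ ⊥ := by intro hb; rw [hb, finrank_bot] at h2; omega
  obtain ⟨y, hy, hy0⟩ := (Submodule.ne_bot_iff _).1 h3
  exact ⟨y, y.2, by simpa using hy0, hy⟩

private lemma complex_sqrt_aux (a b : ℝ) : ∃ x y : ℝ, x * x - y * y = a ∧ x * y + y * x = b := by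
  obtain ⟨c, hc⟩ := IsAlgClosed.exists_pow_nat_eq ((a : ℂ) + b * Complex.I) zero_lt_two
  refine ⟨c.re, c.im, ?_, ?_⟩
  · have := congrArg Complex.re hc
    simpa [pow_two, Complex.mul_re] using this
  · have := congrArg Complex.im hc
    simpa [pow_two, Complex.mul_im] using this

private lemma sq_add_sq_zero_aux {c d : ℝ} (h : c^2 + d^2 = 0) : c = 0 ∧ d = 0 := by
  constructor
  · have hc : c^2 = 0 := by nlinarith [sq_nonneg c, sq_nonneg d]
    exact pow_eq_zero_iff two_ne_zero |>.1 hc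
  · have hd : d^2 = 0 := by nlinarith [sq_nonneg c, sq_nonneg d]
    exact pow_eq_zero_iff two_ne_zero |>.1 hd

/-- The associator of a nonassociative algebra: `(x, y, z) = (xy)z - x(yz)`. -/
def assocator {A : Type*} [NonAssocRing A] (x y z : A) : A :=
  x * y * z - x * (y * z)

/-- An imaginary unit is an element `q` with `q² = -1`. -/
def IsImgUnit {A : Type*} [NonAssocRing A] (q : A) : Prop := q * q = -1

/-- A real nonassociative unital algebra is partially alternative if it has an imaginary
unit and all associators `(x,x,y)`, `(x,y,x)`, `(y,x,x)` vanish for `x` an imaginary unit. -/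
def IsPartiallyAlternative (A : Type*) [NonAssocRing A] : Prop :=
  (∃ q : A, IsImgUnit q) ∧
    ∀ x : A, IsImgUnit x → ∀ y : A,
      assocator x x y = 0 ∧ assocator x y x = 0 ∧ assocator y x x = 0

/-- Corollary 2: a four-dimensional partially alternative real unital division algebra
admitting a reflection has a basis `{1, i, w, v}` realizing the multiplication table
`(Tp)`. -/
theorem exists_basis_Tp {A : Type*} [NonAssocRing A] [Module ℝ A]
    [SMulCommClass ℝ A A] [IsScalarTower ℝ A A]
    (hdim : Module.finrank ℝ A = 4)
    (hdiv : ∀ a : A, a ≠ 0 →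
      Function.Bijective (fun x : A => a * x) ∧ Function.Bijective (fun x : A => x * a))
    (hPA : IsPartiallyAlternative A)
    (hrefl : ∃ φ : A ≃ₗ[ℝ] A, (∀ x y : A, φ (x * y) = φ x * φ y) ∧
      (∀ x : A, φ (φ x) = x) ∧ ∃ x : A, φ x ≠ x) :
    ∃ (B : Basis (Fin 4) ℝ A) (i w v : A),
      B 0 = 1 ∧ B 1 = i ∧ B 2 = w ∧ B 3 = v ∧
      i * i = -1 ∧ i * w = -v ∧ i * v = w ∧ w * i = v ∧ v * i = -w ∧
      w * w ∈ Submodule.span ℝ ({1, i} : Set A) ∧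
      w * v ∈ Submodule.span ℝ ({1, i} : Set A) ∧
      v * w ∈ Submodule.span ℝ ({1, i} : Set A) ∧
      v * v ∈ Submodule.span ℝ ({1, i} : Set A) := by
  obtain ⟨φ, hm, hinv, x₀, hx₀⟩ := hrefl
  haveI : FiniteDimensional ℝ A := .of_finrank_pos (by rw [hdim]; norm_num)
  haveI : Nontrivial A := Module.nontrivial_of_finrank_pos (R := ℝ) (by rw [hdim]; norm_num)
  have hzero : ∀ a b : A, a ≠ 0 → a * b = 0 → b = 0 := by
    intro a b ha h
    exact (hdiv a ha).1.injective (a₁ := b) (a₂ := 0) (by simpa using h)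
  -- eigenspaces of the reflection
  set P : Submodule ℝ A := LinearMap.ker (φ.toLinearMap - LinearMap.id) with hPdef
  set M : Submodule ℝ A := LinearMap.ker (φ.toLinearMap + LinearMap.id) with hMdef
  have hPmem : ∀ x : A, x ∈ P ↔ φ x = x := by
    intro x; simp [hPdef, LinearMap.mem_ker, sub_eq_zero]
  have hMmem : ∀ x : A, x ∈ M ↔ φ x = -x := by
    intro x; simp [hMdef, LinearMap.mem_ker, add_eq_zero_iff_eq_neg]
  have hφ1 : φ (1 : A) = 1 := by
    have h1 : ∀ y : A, φ (1 : A) * φ y = φ y := by intro y; rw [← hm]; simp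
    have h2 := h1 (φ.symm 1)
    simpa using h2
  have h1P : (1 : A) ∈ P := (hPmem 1).2 hφ1
  have hdisj : Disjoint P M := by
    rw [Submodule.disjoint_def]
    intro x hxP hxM
    have h1 : x = -x := ((hPmem x).1 hxP).symm.trans ((hMmem x).1 hxM)
    have h2 : (2 : ℝ) • x = 0 := by rw [two_smul]; nth_rewrite 2 [h1]; abel
    simpa using (smul_eq_zero.1 h2).resolve_left (by norm_num)
  have hcompl : IsCompl P M := by
    constructor
    · exact hdisj
    · rw [codisjoint_iff, eq_top_iff]
      intro x _
      rw [Submodule.mem_sup]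
      refine ⟨(2⁻¹ : ℝ) • (x + φ x), ?_, (2⁻¹ : ℝ) • (x - φ x), ?_, ?_⟩
      · rw [hPmem, map_smul, map_add, hinv]; rw [add_comm]
      · rw [hMmem, map_smul, map_sub, hinv, ← smul_neg, neg_sub]
      · rw [← smul_add, show x + φ x + (x - φ x) = (2:ℝ) • x by rw [two_smul]; abel,
          smul_smul]
        norm_num
  have hsum : finrank ℝ P + finrank ℝ M = 4 := by
    rw [Submodule.finrank_add_eq_of_isCompl hcompl, hdim]
  -- products land in eigenspaces
  have hPP : ∀ x ∈ P, ∀ y ∈ P, x * y ∈ P := by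
    intro x hx y hy; rw [hPmem] at *; rw [hm, hx, hy]
  have hMM : ∀ x ∈ M, ∀ y ∈ M, x * y ∈ P := by
    intro x hx y hy; rw [hPmem]; rw [hMmem] at hx hy; rw [hm, hx, hy, neg_mul_neg]
  have hPM : ∀ x ∈ P, ∀ y ∈ M, x * y ∈ M := by
    intro x hx y hy; rw [hMmem]; rw [hPmem] at hx; rw [hMmem] at hy
    rw [hm, hx, hy, mul_neg]
  have hMP : ∀ x ∈ M, ∀ y ∈ P, x * y ∈ M := by
    intro x hx y hy; rw [hMmem]; rw [hMmem] at hx; rw [hPmem] at hy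
    rw [hm, hx, hy, neg_mul]
  have hMne : M ≠ ⊥ := by
    intro hb
    have h1 : x₀ - φ x₀ ∈ M := by rw [hMmem, map_sub, hinv, neg_sub]
    rw [hb, Submodule.mem_bot, sub_eq_zero] at h1
    exact hx₀ h1.symm
  have hMpos : 0 < finrank ℝ M := by
    rcases Nat.eq_zero_or_pos (finrank ℝ M) with h | h
    · exact absurd (Submodule.finrank_eq_zero.1 h) hMne
    · exact h
  have hPpos : 0 < finrank ℝ P := by
    have h1 : (ℝ ∙ (1:A)) ≤ P := by rw [Submodule.span_singleton_le_iff_mem]; exact h1P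
    have h2 := Submodule.finrank_mono h1
    rw [finrank_span_singleton (one_ne_zero)] at h2
    omega
  -- rule out `dim P = 1`
  have hP1 : finrank ℝ P ≠ 1 := by
    intro h1
    obtain ⟨x, hxM, hx0⟩ := (Submodule.ne_bot_iff _).1 hMne
    obtain ⟨y, hyM, hy0, hxy⟩ := exists_ker_aux M P (LinearMap.mulLeft ℝ x)
      (fun z hz => hMM x hxM z hz) (by omega)
    exact hy0 (hzero x y hx0 hxy)
  -- rule out `dim P = 3`
  have hP3 : finrank ℝ P ≠ 3 := by
    intro h3
    obtain ⟨m0, hmM, hm0⟩ := (Submodule.ne_bot_iff _).1 hMne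
    obtain ⟨a, haP, ha0, ham⟩ := exists_ker_aux P M (LinearMap.mulRight ℝ m0)
      (fun z hz => hPM z hz m0 hmM) (by omega)
    exact hm0 (hzero a m0 ha0 ham)
  have hP2 : finrank ℝ P = 2 := by omega
  -- an element of P outside ℝ·1
  obtain ⟨u, huP, hu1⟩ : ∃ u ∈ P, u ∉ (ℝ ∙ (1:A)) := by
    by_contra h
    push_neg at h
    have h1 : P ≤ ℝ ∙ (1:A) := h
    have h2 := Submodule.finrank_mono h1
    rw [finrank_span_singleton (one_ne_zero), hP2] at h2
    omega
  -- linear independence and spanning facts for pairs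
  have pair_span : ∀ z : A, z ∈ P → (∀ c : ℝ, z ≠ c • 1) →
      Submodule.span ℝ ({1, z} : Set A) = P := by
    intro z hzP hz1
    have hle : Submodule.span ℝ ({1, z} : Set A) ≤ P := by
      rw [Submodule.span_le]
      intro t ht
      simp only [Set.mem_insert_iff, Set.mem_singleton_iff] at ht
      rcases ht with rfl | rfl
      · exact h1P
      · exact hzP
    have hli : LinearIndependent ℝ ![(1:A), z] := by
      rw [LinearIndependent.pair_iff]
      intro s t hst
      by_cases ht : t = 0
      · subst ht
        simp only [zero_smul, add_zero] at hst
        exact ⟨(smul_eq_zero.1 hst).resolve_right one_ne_zero, rfl⟩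
      · exfalso
        apply hz1 (-(t⁻¹ * s))
        have h1 : t • z = -(s • (1:A)) := by
          have h0 := hst
          rwa [add_comm, add_eq_zero_iff_eq_neg] at h0
        have h2 : z = (t⁻¹ : ℝ) • (t • z) := by rw [smul_smul, inv_mul_cancel₀ ht, one_smul]
        rw [h2, h1, smul_neg, smul_smul, ← neg_smul]
    have hrange : Set.range ![(1:A), z] = {1, z} := by
      ext t
      simp only [Set.mem_range, Fin.exists_fin_two, Set.mem_insert_iff, Set.mem_singleton_iff]
      constructor
      · rintro (rfl | rfl) <;> simp
      · rintro (rfl | rfl)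
        · exact Or.inl rfl
        · exact Or.inr rfl
    have hfr : finrank ℝ (Submodule.span ℝ ({1, z} : Set A)) = 2 := by
      rw [← hrange, finrank_span_eq_card hli]
      simp
    exact Submodule.eq_of_le_of_finrank_le hle (by rw [hP2, hfr])
  have hu1' : ∀ c : ℝ, u ≠ c • 1 := by
    intro c hc
    exact hu1 (hc ▸ Submodule.smul_mem _ c (Submodule.mem_span_singleton_self 1))
  have hspanU : Submodule.span ℝ ({1, u} : Set A) = P := pair_span u huP hu1'
  -- u² = α•1 + β•u
  obtain ⟨α, β, hαβ⟩ : ∃ α β : ℝ, α • (1:A) + β • u = u * u := by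
    have : u * u ∈ Submodule.span ℝ ({1, u} : Set A) := by
      rw [hspanU]; exact hPP u huP u huP
    exact Submodule.mem_span_pair.1 this
  -- construct the imaginary unit i ∈ P
  obtain ⟨i, hiP, hi⟩ : ∃ i ∈ P, i * i = -1 := by
    set δ : ℝ := α + β^2/4 with hδdef
    by_cases hδ : 0 ≤ δ
    · exfalso
      set s : ℝ := β/2 + Real.sqrt δ with hs
      set t : ℝ := β/2 - Real.sqrt δ with ht
      have hsq : Real.sqrt δ * Real.sqrt δ = δ := Real.mul_self_sqrt hδ
      have hst : s * t = -α := by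
        rw [hs, ht, hδdef] at *
        linear_combination -hsq
      have hstsum : s + t = β := by rw [hs, ht]; ring
      have key : (u - s • 1) * (u - t • 1) = 0 := by
        have expand : (u - s • 1) * (u - t • 1)
            = u * u - (s + t) • u + (s * t) • (1:A) := by
          simp only [sub_mul, mul_sub, smul_mul_assoc, mul_smul_comm, one_mul, mul_one]
          module
        rw [expand, ← hαβ, hstsum, hst]
        module
      have hne1 : u - s • 1 ≠ 0 := by
        intro h; apply hu1' s; rw [← sub_eq_zero]; exact h
      have hne2 : u - t • 1 ≠ 0 := by
        intro h; apply hu1' t; rw [← sub_eq_zero]; exact h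
      exact hne2 (hzero _ _ hne1 key)
    · push_neg at hδ
      set r : ℝ := Real.sqrt (-δ) with hr
      have hrpos : 0 < r := Real.sqrt_pos.2 (by linarith)
      have hrr : r * r = -δ := Real.mul_self_sqrt (by linarith)
      refine ⟨r⁻¹ • (u - (β/2) • 1), ?_, ?_⟩
      · exact Submodule.smul_mem _ _ (Submodule.sub_mem _ huP (Submodule.smul_mem _ _ h1P))
      · have expand : (u - (β/2) • 1) * (u - (β/2) • 1) = δ • (1:A) := by
          have e1 : (u - (β/2) • 1) * (u - (β/2) • 1)
              = u * u - β • u + (β/2 * (β/2)) • (1:A) := by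
            simp only [sub_mul, mul_sub, smul_mul_assoc, mul_smul_comm, one_mul, mul_one]
            have : ((β/2) + (β/2)) • u = β • u := by norm_num
            module
          rw [e1, ← hαβ]
          have : β/2 * (β/2) = β^2/4 := by ring
          rw [this, hδdef]
          module
        rw [smul_mul_assoc, mul_smul_comm, smul_smul, expand, smul_smul]
        have : r⁻¹ * r⁻¹ * δ = -1 := by
          field_simp
          nlinarith [hrr]
        rw [this, neg_smul, one_smul]
  have hIU : IsImgUnit i := hi
  -- associator identities for i
  have hassoc := hPA.2 i hIU
  have hLi : ∀ y : A, i * (i * y) = -y := by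
    intro y
    have h := (hassoc y).1
    unfold assocator at h
    rw [sub_eq_zero] at h
    rw [← h, hi, neg_one_mul]
  have hRi : ∀ y : A, y * i * i = -y := by
    intro y
    have h := (hassoc y).2.2
    unfold assocator at h
    rw [sub_eq_zero] at h
    rw [h, hi, mul_neg_one]
  have hMi : ∀ y : A, i * y * i = i * (y * i) := by
    intro y
    have h := (hassoc y).2.1
    unfold assocator at h
    rwa [sub_eq_zero] at h
  -- 1 and i are independent; span{1,i} = P
  have hi1 : ∀ c : ℝ, i ≠ c • 1 := by
    intro c hc
    have h1 : i * i = (c * c) • (1:A) := by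
      rw [hc, smul_mul_assoc, mul_smul_comm, smul_smul, one_mul]
    rw [hi] at h1
    have h2 : (c * c + 1) • (1:A) = 0 := by
      rw [add_smul, one_smul, ← h1]; abel
    rcases smul_eq_zero.1 h2 with h | h
    · nlinarith
    · exact one_ne_zero h
  have hspanP : Submodule.span ℝ ({1, i} : Set A) = P := pair_span i hiP hi1
  -- main case split: does i commute with all of M?
  by_cases hcomm : ∀ x ∈ M, i * x = x * i
  · -- central case: build a zero divisor, contradiction
    exfalso
    obtain ⟨w, hwM, hw0⟩ := (Submodule.ne_bot_iff _).1 hMne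
    obtain ⟨a, b, hab⟩ : ∃ a b : ℝ, a • (1:A) + b • i = w * w := by
      have : w * w ∈ Submodule.span ℝ ({1, i} : Set A) := by
        rw [hspanP]; exact hMM w hwM w hwM
      exact Submodule.mem_span_pair.1 this
    obtain ⟨x, y, hre, him⟩ := complex_sqrt_aux a b
    set z : A := x • 1 + y • i with hz
    have hzz : z * z = w * w := by
      have expand : z * z = (x * x - y * y) • (1:A) + (x * y + y * x) • i := by
        simp only [hz, add_mul, mul_add, smul_mul_assoc, mul_smul_comm, one_mul, mul_one, hi]
        module
      rw [expand, hre, him, hab]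
    have hzw : z * w = w * z := by
      simp only [hz, add_mul, mul_add, smul_mul_assoc, mul_smul_comm, one_mul, mul_one,
        hcomm w hwM]
    have key : (z + w) * (w - z) = 0 := by
      rw [add_mul, mul_sub, mul_sub, hzz, hzw]
      abel
    have hzP : z ∈ P := by
      rw [hz]
      exact Submodule.add_mem _ (Submodule.smul_mem _ _ h1P) (Submodule.smul_mem _ _ hiP)
    have hne1 : z + w ≠ 0 := by
      intro h
      have : w = -z := by rw [← sub_eq_zero]; rw [sub_neg_eq_add, add_comm]; exact h
      apply hw0
      exact Submodule.disjoint_def.1 hdisj.symm w hwM (this ▸ Submodule.neg_mem _ hzP)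
    have hne2 : w - z ≠ 0 := by
      intro h
      rw [sub_eq_zero] at h
      apply hw0
      exact Submodule.disjoint_def.1 hdisj.symm w hwM (h ▸ hzP)
    exact hne2 (hzero _ _ hne1 key)
  · -- noncentral case: construct the basis
    push_neg at hcomm
    obtain ⟨x, hxM, hxne⟩ := hcomm
    obtain ⟨w, hw⟩ : ∃ w : A, w = i * x - x * i := ⟨_, rfl⟩
    have hwM : w ∈ M := hw ▸ Submodule.sub_mem _ (hPM i hiP x hxM) (hMP x hxM i hiP)
    have hw0 : w ≠ 0 := hw ▸ sub_ne_zero.2 hxne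
    obtain ⟨v, hv⟩ : ∃ v : A, v = w * i := ⟨_, rfl⟩
    have hvM : v ∈ M := hv ▸ hMP w hwM i hiP
    have hiw : i * w = -v := by
      have h1 : i * w = -x - i * (x * i) := by
        rw [hw, mul_sub, hLi]
      have h2 : v = i * (x * i) + x := by
        rw [hv, hw, sub_mul, hMi, hRi, sub_neg_eq_add]
      rw [h1, h2]
      abel
    have hvi : v * i = -w := by rw [hv]; exact hRi w
    have hiv : i * v = w := by
      have h1 : i * v = i * w * i := by rw [hv, hMi]
      rw [h1, hiw, neg_mul, hvi, neg_neg]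
    have hv0 : v ≠ 0 := by
      intro h
      have := hiv
      rw [h, mul_zero] at this
      exact hw0 this.symm
    -- linear independence of 1, i, w, v
    have hwv_indep : ∀ c d : ℝ, c • w + d • v = 0 → c = 0 ∧ d = 0 := by
      intro c d hcd
      have e2 : c • v - d • w = 0 := by
        have h1 : (c • w + d • v) * i = 0 := by rw [hcd, zero_mul]
        rw [add_mul, smul_mul_assoc, smul_mul_assoc, hvi, ← hv, smul_neg] at h1
        rw [sub_eq_add_neg]
        exact h1
      have e3 : (c^2 + d^2) • w = c • (c • w + d • v) - d • (c • v - d • w) := by module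
      rw [hcd, e2, smul_zero, smul_zero, sub_zero] at e3
      have h4 : c^2 + d^2 = 0 := by
        rcases smul_eq_zero.1 e3 with h | h
        · exact h
        · exact absurd h hw0
      exact sq_add_sq_zero_aux h4
    have h1i_indep : ∀ c d : ℝ, c • (1:A) + d • i = 0 → c = 0 ∧ d = 0 := by
      intro c d hcd
      have e2 : c • i - d • (1:A) = 0 := by
        have h1 : i * (c • (1:A) + d • i) = 0 := by rw [hcd, mul_zero]
        rw [mul_add, mul_smul_comm, mul_smul_comm, mul_one, hi, smul_neg] at h1
        rw [sub_eq_add_neg]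
        exact h1
      have e3 : (c^2 + d^2) • (1:A) = c • (c • (1:A) + d • i) - d • (c • i - d • (1:A)) := by
        module
      rw [hcd, e2, smul_zero, smul_zero, sub_zero] at e3
      have h4 : c^2 + d^2 = 0 := by
        rcases smul_eq_zero.1 e3 with h | h
        · exact h
        · exact absurd h one_ne_zero
      exact sq_add_sq_zero_aux h4
    have hli : LinearIndependent ℝ ![(1:A), i, w, v] := by
      rw [Fintype.linearIndependent_iff]
      intro g hg
      rw [Fin.sum_univ_four] at hg
      simp only [Matrix.cons_val_zero, Matrix.cons_val_one, Matrix.head_cons,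
        Matrix.cons_val_two, Matrix.tail_cons, Matrix.cons_val_three] at hg
      have hpq : (g 0 • (1:A) + g 1 • i) + (g 2 • w + g 3 • v) = 0 := by
        rw [← hg]; abel
      have hpP : g 0 • (1:A) + g 1 • i ∈ P := Submodule.add_mem _ (Submodule.smul_mem _ _ h1P)
        (Submodule.smul_mem _ _ hiP)
      have hqM : g 2 • w + g 3 • v ∈ M := Submodule.add_mem _ (Submodule.smul_mem _ _ hwM)
        (Submodule.smul_mem _ _ hvM)
      have hp0 : g 0 • (1:A) + g 1 • i = 0 := by
        have h1 : g 0 • (1:A) + g 1 • i = -(g 2 • w + g 3 • v) := by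
          rw [← sub_eq_zero, sub_neg_eq_add]; exact hpq
        exact Submodule.disjoint_def.1 hdisj _ hpP (h1 ▸ Submodule.neg_mem _ hqM)
      have hq0 : g 2 • w + g 3 • v = 0 := by rw [hp0, zero_add] at hpq; exact hpq
      obtain ⟨h0, h1⟩ := h1i_indep _ _ hp0
      obtain ⟨h2, h3⟩ := hwv_indep _ _ hq0
      intro j
      fin_cases j <;> assumption
    have hcard : Fintype.card (Fin 4) = finrank ℝ A := by rw [hdim]; simp
    set B := basisOfLinearIndependentOfCardEqFinrank hli hcard with hB
    have hBcoe : ⇑B = ![(1:A), i, w, v] :=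
      coe_basisOfLinearIndependentOfCardEqFinrank hli hcard
    refine ⟨B, i, w, v, ?_, ?_, ?_, ?_, hi, hiw, hiv, hv.symm, hvi, ?_, ?_, ?_, ?_⟩
    · rw [hBcoe]; rfl
    · rw [hBcoe]; rfl
    · rw [hBcoe]; rfl
    · rw [hBcoe]; rfl
    · rw [hspanP]; exact hMM w hwM w hwM
    · rw [hspanP]; exact hMM w hwM v hvM
    · rw [hspanP]; exact hMM v hvM w hwM
    · rw [hspanP]; exact hMM v hvM v hvM
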